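/- Let 0 ≤ s < t < t₁. If a Markovian transition semigroup (P_{s,t}) is strongly Feller at (t, t₁) and irreducible at (s, t), then it is regular at (s, t₁); that is, all transition probability measures P(s, x, t₁, ·), x ∈ ℝ^m, are mutually equivalent. -/

import Mathlib

open MeasureTheory

/-- Strong Feller at `(t, t₁)` together with irreducibility at `(s, t)` implies
regularity at `(s, t₁)`: all measures `P s x t₁ ·` are mutually equivalent. -/
theorem stmt_6 (m : ℕ) (P : ℝ → ℝ → (Fin m → ℝ) → Measure (Fin m → ℝ))
    (s t t₁ : ℝ) (hs : 0 ≤ s) (hst : s < t) (htt₁ : t < t₁)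
    (hprob : ∀ u v : ℝ, ∀ x, IsProbabilityMeasure (P u v x))
    (hmeas : ∀ u v : ℝ, ∀ A : Set (Fin m → ℝ), MeasurableSet A →
      Measurable fun x => P u v x A)
    -- Chapman–Kolmogorov between times s, t, t₁
    (hCK : ∀ x : Fin m → ℝ, ∀ A : Set (Fin m → ℝ), MeasurableSet A →
      P s t₁ x A = ∫⁻ y, P t t₁ y A ∂ P s t x)
    -- strong Feller at (t, t₁)
    (hSF : ∀ f : (Fin m → ℝ) → ℝ, Measurable f → (∃ K, ∀ z, |f z| ≤ K) →
      Continuous fun x => ∫ z, f z ∂ P t t₁ x)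
    -- irreducibility at (s, t)
    (hIrr : ∀ x : Fin m → ℝ, ∀ A : Set (Fin m → ℝ),
      IsOpen A → A.Nonempty → 0 < P s t x A) :
    ∀ x y : Fin m → ℝ, P s t₁ x ≪ P s t₁ y := by
  intro x y
  refine Measure.AbsolutelyContinuous.mk (fun A hA hyA => ?_)
  -- the function z ↦ (P t t₁ z A).toReal is continuous by strong Feller
  have hind : Measurable (A.indicator (fun _ => (1:ℝ))) := measurable_one.indicator hA
  have hbd : ∃ K, ∀ z, |A.indicator (fun _ => (1:ℝ)) z| ≤ K := by
    refine ⟨1, fun z => ?_⟩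
    by_cases hz : z ∈ A <;> simp [Set.indicator, hz]
  have hcont := hSF _ hind hbd
  have hval : ∀ z, (∫ w, A.indicator (fun _ => (1:ℝ)) w ∂ P t t₁ z)
      = (P t t₁ z A).toReal := by
    intro z
    rw [integral_indicator_const (1:ℝ) hA]
    simp
    rfl
  have hcont' : Continuous fun z => (P t t₁ z A).toReal := by
    simpa only [hval] using hcont
  -- Chapman–Kolmogorov and P s t₁ y A = 0 give a.e. vanishing
  have h0 : ∫⁻ z, P t t₁ z A ∂ P s t y = 0 := by
    rw [← hCK y A hA]; exact hyA
  have hae : ∀ᵐ z ∂ P s t y, P t t₁ z A = 0 :=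
    (lintegral_eq_zero_iff (hmeas t t₁ A hA)).mp h0
  -- show the function vanishes everywhere
  have hall : ∀ z, P t t₁ z A = 0 := by
    by_contra hcon
    push_neg at hcon
    obtain ⟨z₀, hz₀⟩ := hcon
    have hz₀' : 0 < (P t t₁ z₀ A).toReal := by
      have := hprob t t₁ z₀
      exact ENNReal.toReal_pos hz₀ (measure_ne_top _ _)
    set U : Set (Fin m → ℝ) := (fun z => (P t t₁ z A).toReal) ⁻¹' Set.Ioi 0 with hU
    have hUopen : IsOpen U := isOpen_Ioi.preimage hcont'
    have hUne : U.Nonempty := ⟨z₀, hz₀'⟩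
    have hUpos : 0 < P s t y U := hIrr y U hUopen hUne
    have hUsub : U ⊆ {z | ¬ P t t₁ z A = 0} := by
      intro z hz
      simp only [Set.mem_setOf_eq]
      intro h0'
      rw [hU, Set.mem_preimage, Set.mem_Ioi, h0'] at hz
      simp at hz
    have : P s t y U = 0 := measure_mono_null hUsub hae
    exact absurd this hUpos.ne'
  -- conclude
  rw [hCK x A hA]
  simp [hall]
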